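/- arXiv:math/9909070 — 2 statements merged into one kernel-verified Lean document; each statement's English description precedes it below -/
import Mathlib

section
/- The Magnus expansion M : F_i → ℤ[[X₁,...,X_i]], defined on the free group F_i on i generators by sending the generator x_j to 1 + X_j, is an injective group homomorphism into the group of units of the ring of formal power series in i non-commuting variables with integer coefficients. -/
open scoped Classical

noncomputable section

/-- Formal power series in non-commuting variables indexed by `σ`, with
coefficients in `R`: a series is given by the function assigning to each word
(non-commutative monomial) in the variables its coefficient. -/
def NCSeries (σ R : Type*) := List σ → R

namespace NCSeries

variable {σ : Type*} {R : Type*} [CommRing R]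

instance : AddCommGroup (NCSeries σ R) := Pi.addCommGroup

instance : One (NCSeries σ R) := ⟨fun w => if w = [] then 1 else 0⟩

/-- Cauchy product of non-commutative power series. -/
instance : Mul (NCSeries σ R) :=
  ⟨fun f g w => ∑ n ∈ Finset.range (w.length + 1), f (w.take n) * g (w.drop n)⟩

theorem mul_apply (f g : NCSeries σ R) (w : List σ) :
    (f * g) w = ∑ n ∈ Finset.range (w.length + 1), f (w.take n) * g (w.drop n) :=
  rfl

theorem one_apply (w : List σ) : (1 : NCSeries σ R) w = if w = [] then 1 else 0 :=
  rfl

theorem add_apply (f g : NCSeries σ R) (w : List σ) : (f + g) w = f w + g w := rfl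

theorem zero_apply (w : List σ) : (0 : NCSeries σ R) w = 0 := rfl

instance instRing : Ring (NCSeries σ R) where
  __ := (inferInstance : AddCommGroup (NCSeries σ R))
  left_distrib f g h := funext fun w => by
    simp [mul_apply, add_apply, mul_add, Finset.sum_add_distrib]
  right_distrib f g h := funext fun w => by
    simp [mul_apply, add_apply, add_mul, Finset.sum_add_distrib]
  zero_mul f := funext fun w => by simp [mul_apply, zero_apply]
  mul_zero f := funext fun w => by simp [mul_apply, zero_apply]
  mul_assoc f g h := funext fun w => by
    have tri : ∀ T : ℕ → ℕ → R,
        ∑ m ∈ Finset.range (w.length + 1), ∑ n ∈ Finset.range (m + 1), T n m =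
          ∑ n ∈ Finset.range (w.length + 1),
            ∑ p ∈ Finset.range (w.length - n + 1), T n (n + p) := by
      intro T
      rw [Finset.sum_sigma', Finset.sum_sigma']
      refine Finset.sum_nbij' (fun x => ⟨x.2, x.1 - x.2⟩)
        (fun x => ⟨x.1 + x.2, x.1⟩) ?_ ?_ ?_ ?_ ?_ <;>
        rintro ⟨a, b⟩ hab <;>
        simp only [Finset.mem_sigma, Finset.mem_range] at hab
      · simp only [Finset.mem_sigma, Finset.mem_range]; omega
      · simp only [Finset.mem_sigma, Finset.mem_range]; omega
      · dsimp only
        have : b + (a - b) = a := by omega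
        rw [this]
      · dsimp only
        have : a + b - a = b := by omega
        rw [this]
      · dsimp only
        have : b + (a - b) = a := by omega
        rw [this]
    calc (f * g * h) w
        = ∑ m ∈ Finset.range (w.length + 1), ∑ n ∈ Finset.range (m + 1),
            f (w.take n) * (g ((w.drop n).take (m - n)) * h (w.drop m)) := by
          rw [mul_apply]
          refine Finset.sum_congr rfl fun m hm => ?_
          rw [Finset.mem_range] at hm
          rw [mul_apply, Finset.sum_mul]
          have hlen : (w.take m).length = m := by rw [List.length_take]; omega
          rw [hlen]
          refine Finset.sum_congr rfl fun n hn => ?_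
          rw [Finset.mem_range] at hn
          rw [List.take_take, List.drop_take, min_eq_left (by omega : n ≤ m),
            mul_assoc]
      _ = ∑ n ∈ Finset.range (w.length + 1),
            ∑ p ∈ Finset.range (w.length - n + 1),
              f (w.take n) * (g ((w.drop n).take (n + p - n)) * h (w.drop (n + p))) :=
          tri fun n m => f (w.take n) * (g ((w.drop n).take (m - n)) * h (w.drop m))
      _ = (f * (g * h)) w := by
          rw [mul_apply]
          refine Finset.sum_congr rfl fun n hn => ?_
          rw [mul_apply, Finset.mul_sum]
          have hlen : (w.drop n).length = w.length - n := by simp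
          rw [hlen]
          refine Finset.sum_congr rfl fun p hp => ?_
          rw [List.drop_drop, Nat.add_sub_cancel_left]
  one_mul f := funext fun w => by
    rw [mul_apply, Finset.sum_eq_single 0]
    · simp [one_apply]
    · intro n hn hn0
      rw [Finset.mem_range] at hn
      have hw : w ≠ [] := by
        intro h
        subst h
        simp at hn
        omega
      have : w.take n ≠ [] := by
        simp [List.take_eq_nil_iff, hn0, hw]
      simp [one_apply, this]
    · simp
  mul_one f := funext fun w => by
    rw [mul_apply, Finset.sum_eq_single w.length]
    · simp [one_apply]
    · intro n hn hn0
      rw [Finset.mem_range] at hn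
      have : w.drop n ≠ [] := by
        simp only [ne_eq, List.drop_eq_nil_iff]
        omega
      simp [one_apply, this]
    · simp

/-- The non-commuting variable (indeterminate) `X j`. -/
def X (j : σ) : NCSeries σ R := fun w => if w = [j] then 1 else 0

/-- The geometric series `1 - X_j + X_j^2 - X_j^3 + ⋯`: its coefficient at the
word `X_j^n` is `(-1)^n`, and all other coefficients vanish. -/
def geom (j : σ) : NCSeries σ R := fun w =>
  if ∀ a ∈ w, a = j then (-1 : R) ^ w.length else 0

theorem onePlusX_apply (j : σ) (u : List σ) :
    (1 + X j : NCSeries σ R) u = if u = [] then 1 else if u = [j] then 1 else 0 := by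
  by_cases h : u = [] <;> simp [add_apply, one_apply, X, h]

theorem onePlusX_mul_geom (j : σ) : (1 + X j : NCSeries σ R) * geom j = 1 := by
  funext w
  cases w with
  | nil => simp [mul_apply, onePlusX_apply, one_apply, geom]
  | cons a t =>
    rw [mul_apply]
    show ∑ n ∈ Finset.range (t.length + 1 + 1), _ = _
    rw [Finset.sum_range_succ', Finset.sum_range_succ']
    have h2 : ∑ n ∈ Finset.range t.length,
        (1 + X j : NCSeries σ R) ((a :: t).take (n + 1 + 1)) *
          geom j ((a :: t).drop (n + 1 + 1)) = 0 := by
      refine Finset.sum_eq_zero fun n hn => ?_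
      rw [Finset.mem_range] at hn
      have ht : t ≠ [] := by intro h; subst h; simp at hn
      have h1 : (a :: t).take (n + 1 + 1) = a :: t.take (n + 1) := by
        simp [List.take_succ_cons]
      have hne : t.take (n + 1) ≠ [] := by
        simp [List.take_eq_nil_iff, ht]
      rw [h1, onePlusX_apply]
      simp [hne]
    rw [h2]
    simp only [List.take_succ_cons, List.take_zero, List.drop_succ_cons,
      List.drop_zero, List.take, List.drop]
    rw [onePlusX_apply, onePlusX_apply]
    by_cases ha : a = j
    · by_cases ht : ∀ x ∈ t, x = j
      · simp [geom, one_apply, ha, ht, pow_succ]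
        split_ifs <;> ring
      · simp [geom, one_apply, ha, ht]
    · have : ¬ ([a] = [j]) := by simp [ha]
      simp [geom, one_apply, ha, this]

/-- Reversal of words, an anti-automorphism of the series ring. -/
def rev (f : NCSeries σ R) : NCSeries σ R := fun w => f w.reverse

theorem rev_mul (f g : NCSeries σ R) : rev (f * g) = rev g * rev f := by
  funext w
  show (f * g) w.reverse = _
  rw [mul_apply, mul_apply, List.length_reverse]
  calc ∑ n ∈ Finset.range (w.length + 1), f (w.reverse.take n) * g (w.reverse.drop n)
      = ∑ n ∈ Finset.range (w.length + 1),
          g ((w.take (w.length - n)).reverse) * f ((w.drop (w.length - n)).reverse) :=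
        Finset.sum_congr rfl fun n _ => by
          rw [List.take_reverse, List.drop_reverse, mul_comm]
    _ = ∑ n ∈ Finset.range (w.length + 1),
          g ((w.take n).reverse) * f ((w.drop n).reverse) := by
        have h := Finset.sum_range_reflect
          (fun n => g ((w.take n).reverse) * f ((w.drop n).reverse)) (w.length + 1)
        simpa using h
    _ = ∑ n ∈ Finset.range (w.length + 1), rev g (w.take n) * rev f (w.drop n) := rfl

theorem rev_one : rev (1 : NCSeries σ R) = 1 := by
  funext w
  simp [rev, one_apply]

theorem rev_geom (j : σ) : rev (geom j : NCSeries σ R) = geom j := by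
  funext w
  simp [rev, geom]

theorem rev_onePlusX (j : σ) : rev (1 + X j : NCSeries σ R) = 1 + X j := by
  funext w
  simp [rev, onePlusX_apply, List.reverse_eq_iff]

theorem geom_mul_onePlusX (j : σ) : (geom j : NCSeries σ R) * (1 + X j) = 1 := by
  have h1 : rev ((1 + X j : NCSeries σ R) * geom j) = rev 1 := by
    rw [onePlusX_mul_geom]
  rw [rev_mul, rev_geom, rev_onePlusX, rev_one] at h1
  exact h1

/-- `1 + X j` is a unit of the series ring, with inverse the geometric series
`1 - X_j + X_j^2 - ⋯`. -/
def magnusUnit (j : σ) : (NCSeries σ R)ˣ where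
  val := 1 + X j
  inv := geom j
  val_inv := onePlusX_mul_geom j
  inv_val := geom_mul_onePlusX j

end NCSeries

/-- The Magnus expansion: the group homomorphism from the free group on `σ`
to the units of the ring of formal power series in non-commuting variables
indexed by `σ`, sending the generator `x j` to `1 + X j`. -/
def magnus (R : Type*) [CommRing R] (σ : Type*) :
    FreeGroup σ →* (NCSeries σ R)ˣ :=
  FreeGroup.lift fun j => NCSeries.magnusUnit j

end
noncomputable section MagnusInjAux

open NCSeries

namespace MagnusInjAux

variable {σ : Type*} [DecidableEq σ]

/-! ### Run-dedup (destutter) of lists -/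

/-- Collapse adjacent equal letters. -/
def dd : List σ → List σ
  | [] => []
  | [a] => [a]
  | a :: b :: l => if a = b then dd (b :: l) else a :: dd (b :: l)

@[simp] lemma dd_nil : dd ([] : List σ) = [] := rfl

lemma dd_cons (a : σ) (l : List σ) :
    dd (a :: l) = if l.head? = some a then dd l else a :: dd l := by
  cases l with
  | nil => simp [dd]
  | cons b t =>
    by_cases h : a = b
    · subst h; simp [dd]
    · rw [dd, if_neg h, if_neg (by simp [Ne.symm h])]

lemma dd_head? : ∀ l : List σ, (dd l).head? = l.head? := by
  intro l
  induction l with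
  | nil => rfl
  | cons a l ih =>
    rw [dd_cons]
    split
    · next h => rw [ih, h]; rfl
    · rfl

lemma dd_chain' : ∀ l : List σ, (dd l).Chain' (· ≠ ·) := by
  intro l
  induction l with
  | nil => exact List.isChain_nil
  | cons a l ih =>
    rw [dd_cons]
    split
    · exact ih
    · next h =>
      refine List.isChain_cons.mpr ?_
      refine ⟨?_, ih⟩
      intro y hy
      rw [dd_head?] at hy
      intro hay
      subst hay
      exact h (Option.mem_def.mp hy)

lemma dd_eq_self : ∀ {l : List σ}, l.Chain' (· ≠ ·) → dd l = l := by
  intro l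
  induction l with
  | nil => intro _; rfl
  | cons a l ih =>
    intro h
    obtain ⟨h1, h2⟩ := List.isChain_cons.mp h
    rw [dd_cons]
    split
    · next hh => exact absurd rfl (h1 a hh)
    · rw [ih h2]

lemma dd_replicate_append (a : σ) {T : List σ} (hT : T.head? ≠ some a) :
    ∀ r, dd (List.replicate (r + 1) a ++ T) = a :: dd T := by
  intro r
  induction r with
  | zero => rw [List.replicate_one, List.singleton_append, dd_cons, if_neg hT]
  | succ r ih =>
    rw [List.replicate_succ, List.cons_append, dd_cons]
    rw [if_pos (by simp [List.replicate_succ])]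
    exact ih

lemma dd_replicate_append_head (a : σ) {T : List σ} (hT : T.head? = some a) :
    ∀ r, dd (List.replicate r a ++ T) = dd T := by
  intro r
  induction r with
  | zero => rw [List.replicate_zero, List.nil_append]
  | succ r ih =>
    rw [List.replicate_succ, List.cons_append, dd_cons]
    rw [if_pos ?_]
    · exact ih
    · cases r with
      | zero => simpa using hT
      | succ r => simp [List.replicate_succ]

lemma sublist_of_cons {l t : List σ} {x : σ}
    (h : l.Sublist (x :: t)) (hne : l.head? ≠ some x) : l.Sublist t := by
  cases h with
  | cons _ h => exact h
  | cons_cons _ h => simp at hne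

/-! ### The series attached to a word in the free group -/

/-- The unit of the series ring attached to a single letter. -/
def ul (ℓ : σ × Bool) : (NCSeries σ ℤ)ˣ :=
  cond ℓ.2 (NCSeries.magnusUnit ℓ.1) (NCSeries.magnusUnit ℓ.1)⁻¹

lemma ul_val_true (a : σ) : ((ul (a, true)).val : NCSeries σ ℤ) = 1 + X a := rfl

lemma ul_val_false (a : σ) : ((ul (a, false)).val : NCSeries σ ℤ) = geom a := rfl

/-- A series is supported on words in the single letter `a`. -/
def PureOn (a : σ) (f : NCSeries σ ℤ) : Prop :=
  ∀ w, f w ≠ 0 → ∀ x ∈ w, x = a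

lemma pureOn_ul (a : σ) (ε : Bool) : PureOn a ((ul (a, ε)).val) := by
  cases ε with
  | false =>
    intro w hw x hx
    by_contra hxa
    apply hw
    rw [ul_val_false]
    have hcond : ¬ ∀ y ∈ w, y = a := by push_neg; exact ⟨x, hx, hxa⟩
    simp only [NCSeries.geom, if_neg hcond]
  | true =>
    intro w hw x hx
    by_contra hxa
    apply hw
    rw [ul_val_true, onePlusX_apply]
    have h1 : w ≠ [] := by rintro rfl; simp at hx
    have h2 : w ≠ [a] := by rintro rfl; simp at hx; exact hxa hx
    rw [if_neg h1, if_neg h2]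

lemma ul_apply_nil (ℓ : σ × Bool) : ((ul ℓ).val : NCSeries σ ℤ) [] = 1 := by
  obtain ⟨a, ε⟩ := ℓ
  cases ε with
  | false =>
    rw [ul_val_false]
    simp [NCSeries.geom]
  | true => rw [ul_val_true, onePlusX_apply]; simp

lemma ul_apply_single (a : σ) (ε : Bool) :
    ((ul (a, ε)).val : NCSeries σ ℤ) [a] = (if ε then 1 else -1) := by
  cases ε with
  | false =>
    rw [ul_val_false]
    simp [NCSeries.geom]
  | true => rw [ul_val_true, onePlusX_apply]; simp

/-- The series attached to a word: the value of the product of the letter units. -/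
def FL (L : List (σ × Bool)) : NCSeries σ ℤ := ((L.map ul).prod : (NCSeries σ ℤ)ˣ).val

@[simp] lemma FL_nil : FL ([] : List (σ × Bool)) = 1 := by
  simp [FL]

lemma FL_cons (ℓ : σ × Bool) (L : List (σ × Bool)) :
    FL (ℓ :: L) = (ul ℓ).val * FL L := by
  simp [FL]

lemma FL_apply_nil : ∀ L : List (σ × Bool), FL L [] = 1 := by
  intro L
  induction L with
  | nil => rw [FL_nil, one_apply]; simp
  | cons ℓ L ih =>
    rw [FL_cons, NCSeries.mul_apply]
    simp only [List.length_nil, Nat.zero_add, Finset.sum_range_one, List.take_nil,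
      List.drop_nil]
    rw [ih, ul_apply_nil, mul_one]

/-! ### Splitting products over a run prefix -/

lemma mul_split (f g : NCSeries σ ℤ) {a : σ} (hf : PureOn a f) {T : List σ}
    (hT : T.head? ≠ some a) (r : ℕ) :
    (f * g) (List.replicate r a ++ T) =
      ∑ n ∈ Finset.range (r + 1),
        f (List.replicate n a) * g (List.replicate (r - n) a ++ T) := by
  rw [NCSeries.mul_apply]
  have hlen : (List.replicate r a ++ T).length = r + T.length := by simp
  rw [hlen]
  rw [← Finset.sum_subset (Finset.range_subset_range.2 (by omega : r + 1 ≤ r + T.length + 1))]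
  · apply Finset.sum_congr rfl
    intro n hn
    rw [Finset.mem_range] at hn
    have hn' : n ≤ r := by omega
    have htake : (List.replicate r a ++ T).take n = List.replicate n a := by
      rw [List.take_append, List.take_replicate, List.length_replicate,
        Nat.sub_eq_zero_of_le hn', List.take_zero, List.append_nil,
        min_eq_left hn']
    have hdrop : (List.replicate r a ++ T).drop n = List.replicate (r - n) a ++ T := by
      rw [List.drop_append, List.drop_replicate, List.length_replicate,
        Nat.sub_eq_zero_of_le hn', List.drop_zero]
    rw [htake, hdrop]
  · intro n hn hn'
    rw [Finset.mem_range] at hn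
    rw [Finset.mem_range, not_lt] at hn'
    cases T with
    | nil => exfalso; simp at hn; omega
    | cons c T' =>
      have hca : c ≠ a := by simpa using hT
      have hmem : c ∈ (List.replicate r a ++ (c :: T')).take n := by
        rw [List.take_append,
          List.take_of_length_le (by simp; omega : (List.replicate r a).length ≤ n),
          List.length_replicate]
        obtain ⟨k, hk⟩ : ∃ k, n - r = k + 1 := ⟨n - r - 1, by omega⟩
        rw [hk, List.take_succ_cons]
        exact List.mem_append_right _ List.mem_cons_self
      apply mul_eq_zero_of_left
      by_contra h0
      exact hca (hf _ h0 c hmem)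

/-! ### Runs and the leading monomial -/

/-- The leading run of letters with variable `a`. -/
def runP (a : σ) : List (σ × Bool) → List (σ × Bool)
  | [] => []
  | (b, ε) :: L => if b = a then (b, ε) :: runP a L else []

/-- Drop the leading run of letters with variable `a`. -/
def dropR (a : σ) : List (σ × Bool) → List (σ × Bool)
  | [] => []
  | (b, ε) :: L => if b = a then dropR a L else (b, ε) :: L

lemma dropR_length (a : σ) : ∀ L : List (σ × Bool), (dropR a L).length ≤ L.length := by
  intro L
  induction L with
  | nil => simp [dropR]
  | cons ℓ L ih =>
    obtain ⟨b, ε⟩ := ℓ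
    by_cases h : b = a
    · rw [dropR, if_pos h]; exact le_trans ih (by simp)
    · rw [dropR, if_neg h]

lemma head_map_dropR (a : σ) : ∀ L : List (σ × Bool),
    ((dropR a L).map Prod.fst).head? ≠ some a := by
  intro L
  induction L with
  | nil => simp [dropR]
  | cons ℓ L ih =>
    obtain ⟨b, ε⟩ := ℓ
    by_cases h : b = a
    · rw [dropR, if_pos h]; exact ih
    · rw [dropR, if_neg h]; simpa using h

/-- The leading monomial word of a word. -/
def monL (L : List (σ × Bool)) : List σ := dd (L.map Prod.fst)

lemma monL_head? (L : List (σ × Bool)) : (monL L).head? = (L.map Prod.fst).head? :=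
  dd_head? _

/-! ### The support lemma -/

lemma supp : ∀ (L : List (σ × Bool)) (w : List σ), ¬ (dd w).Sublist (monL L) → FL L w = 0 := by
  intro L
  induction L with
  | nil =>
    intro w hw
    cases w with
    | nil => exact absurd (by simp [monL]) hw
    | cons c w' => rw [FL_nil, one_apply, if_neg (by simp)]
  | cons ℓ L₂ ih =>
    obtain ⟨b, ε⟩ := ℓ
    intro w hw
    rw [FL_cons, NCSeries.mul_apply]
    apply Finset.sum_eq_zero
    intro n hn
    rw [Finset.mem_range] at hn
    by_cases h0 : ((ul (b, ε)).val : NCSeries σ ℤ) (w.take n) = 0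
    · rw [h0, zero_mul]
    have hall : ∀ x ∈ w.take n, x = b := pureOn_ul b ε _ h0
    have hlen : (w.take n).length = n := by rw [List.length_take]; omega
    have htake : w.take n = List.replicate n b :=
      List.eq_replicate_iff.mpr ⟨hlen, hall⟩
    suffices hz : FL L₂ (w.drop n) = 0 by rw [hz, mul_zero]
    apply ih
    intro hsub
    apply hw
    have hw_eq : w = List.replicate n b ++ w.drop n := by
      conv_lhs => rw [← List.take_append_drop n w]
      rw [htake]
    have hmon : monL ((b, ε) :: L₂) =
        if (L₂.map Prod.fst).head? = some b then monL L₂ else b :: monL L₂ := by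
      simp only [monL, List.map_cons]
      exact dd_cons b _
    have hm2 : (monL L₂).Sublist (monL ((b, ε) :: L₂)) := by
      rw [hmon]
      split
      · exact List.Sublist.refl _
      · exact List.sublist_cons_self _ _
    rcases Nat.eq_zero_or_pos n with hn0 | hn1
    · subst hn0
      simp only [List.drop_zero] at hsub
      exact hsub.trans hm2
    · obtain ⟨m, rfl⟩ : ∃ m, n = m + 1 := ⟨n - 1, by omega⟩
      by_cases hh : (w.drop (m + 1)).head? = some b
      · have hddw : dd w = dd (w.drop (m + 1)) := by
          conv_lhs => rw [hw_eq]
          exact dd_replicate_append_head b hh (m + 1)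
        rw [hddw]
        exact hsub.trans hm2
      · have hddw : dd w = b :: dd (w.drop (m + 1)) := by
          conv_lhs => rw [hw_eq]
          exact dd_replicate_append b hh m
        rw [hddw, hmon]
        split
        · next hcase =>
          have hml : (monL L₂).head? = some b := by rw [monL_head?]; exact hcase
          obtain ⟨t, ht⟩ : ∃ t, monL L₂ = b :: t := by
            cases hml' : monL L₂ with
            | nil => rw [hml'] at hml; simp at hml
            | cons c t =>
              rw [hml'] at hml
              simp only [List.head?_cons, Option.some.injEq] at hml
              exact ⟨t, by rw [hml]⟩
          rw [ht]
          apply List.Sublist.cons₂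
          refine sublist_of_cons (ht ▸ hsub) ?_
          rw [dd_head?]
          exact hh
        · exact List.Sublist.cons₂ _ hsub

/-! ### The main coefficient computation -/

lemma main (a : σ) : ∀ (L : List (σ × Bool)) (r : ℕ),
    FL L (List.replicate r a ++ monL (dropR a L)) =
      FL (runP a L) (List.replicate r a) * FL (dropR a L) (monL (dropR a L)) := by
  intro L
  induction L with
  | nil =>
    intro r
    show FL [] (List.replicate r a ++ monL []) = FL [] (List.replicate r a) * FL [] (monL [])
    rw [show monL ([] : List (σ × Bool)) = [] from rfl, List.append_nil, FL_nil]
    simp [NCSeries.one_apply]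
  | cons ℓ L₂ ih =>
    obtain ⟨b, ε⟩ := ℓ
    intro r
    by_cases hba : b = a
    · subst hba
      have hdr : dropR b ((b, ε) :: L₂) = dropR b L₂ := by rw [dropR, if_pos rfl]
      have hrp : runP b ((b, ε) :: L₂) = (b, ε) :: runP b L₂ := by rw [runP, if_pos rfl]
      rw [hdr, hrp, FL_cons, FL_cons]
      have hTh : (monL (dropR b L₂)).head? ≠ some b := by
        rw [monL_head?]; exact head_map_dropR b L₂
      rw [mul_split _ _ (pureOn_ul b ε) hTh r]
      have h2 : ∀ n ∈ Finset.range (r + 1),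
          ((ul (b, ε)).val : NCSeries σ ℤ) (List.replicate n b) *
              FL L₂ (List.replicate (r - n) b ++ monL (dropR b L₂)) =
            ((ul (b, ε)).val : NCSeries σ ℤ) (List.replicate n b) *
                FL (runP b L₂) (List.replicate (r - n) b) *
              FL (dropR b L₂) (monL (dropR b L₂)) := by
        intro n _
        rw [ih (r - n), mul_assoc]
      rw [Finset.sum_congr rfl h2, ← Finset.sum_mul]
      congr 1
      have hms := mul_split ((ul (b, ε)).val) (FL (runP b L₂)) (pureOn_ul b ε)
        (T := ([] : List σ)) (by simp) r
      simp only [List.append_nil] at hms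
      rw [hms]
    · have hdr : dropR a ((b, ε) :: L₂) = (b, ε) :: L₂ := by rw [dropR, if_neg hba]
      have hrp : runP a ((b, ε) :: L₂) = [] := by rw [runP, if_neg hba]
      rw [hdr, hrp, FL_nil]
      cases r with
      | zero =>
        simp only [List.replicate_zero, List.nil_append]
        simp [NCSeries.one_apply]
      | succ m =>
        have h1 : (1 : NCSeries σ ℤ) (List.replicate (m + 1) a) = 0 := by
          rw [one_apply, if_neg (by simp [List.replicate_succ])]
        rw [h1, zero_mul]
        apply supp
        have hhead : (monL ((b, ε) :: L₂)).head? ≠ some a := by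
          rw [monL_head?]
          simpa using hba
        rw [dd_replicate_append a hhead m,
          dd_eq_self (by exact dd_chain' _)]
        intro hcon
        have := hcon.length_le
        simp at this


/-! ### Nonvanishing at the leading monomial -/

/-- Reduced words: no adjacent cancelling pair. -/
def Red (L : List (σ × Bool)) : Prop :=
  L.Chain' (fun x y => x.1 = y.1 → x.2 = y.2)

lemma red_dropR (a : σ) : ∀ L : List (σ × Bool), Red L → Red (dropR a L) := by
  intro L
  induction L with
  | nil => intro h; exact h
  | cons ℓ L₂ ih =>
    obtain ⟨b, ε⟩ := ℓ
    intro h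
    by_cases hba : b = a
    · rw [dropR, if_pos hba]
      exact ih h.tail
    · rw [dropR, if_neg hba]
      exact h

lemma runP_head_nil {a : σ} {L : List (σ × Bool)}
    (h : (L.map Prod.fst).head? ≠ some a) : runP a L = [] := by
  cases L with
  | nil => rfl
  | cons ℓ L₂ =>
    obtain ⟨b, ε⟩ := ℓ
    rw [runP, if_neg]
    simpa using h

lemma runP_replicate (a : σ) : ∀ (L : List (σ × Bool)) (ε : Bool), Red L →
    L.head? = some (a, ε) → runP a L = List.replicate (runP a L).length (a, ε) := by
  intro L
  induction L with
  | nil => intro ε _ h; simp at h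
  | cons ℓ L₂ ih =>
    intro ε hred hhead
    have hℓ : ℓ = (a, ε) := by simpa using hhead
    subst hℓ
    have hr : runP a ((a, ε) :: L₂) = (a, ε) :: runP a L₂ := by rw [runP, if_pos rfl]
    rw [hr, List.length_cons, List.replicate_succ]
    congr 1
    cases L₂ with
    | nil => rfl
    | cons ℓ₂ L₃ =>
      obtain ⟨c, δ⟩ := ℓ₂
      by_cases hca : c = a
      · subst hca
        obtain rfl : ε = δ := (List.isChain_cons.mp hred).1 (c, δ) rfl rfl
        exact ih ε hred.tail rfl
      · rw [runP_head_nil (by simpa using hca)]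
        rfl
  
lemma FL_replicate (a : σ) (ε : Bool) :
    ∀ m : ℕ, FL (List.replicate m (a, ε)) [a] = (if ε then (m : ℤ) else -(m : ℤ)) := by
  intro m
  induction m with
  | zero =>
    rw [List.replicate_zero, FL_nil, one_apply, if_neg (by simp)]
    simp
  | succ m ih =>
    rw [List.replicate_succ, FL_cons, NCSeries.mul_apply]
    show ∑ n ∈ Finset.range (1 + 1), _ = _
    rw [Finset.sum_range_succ, Finset.sum_range_one]
    simp only [List.take_zero, List.drop_zero, List.take_one, List.drop_one]
    rw [ul_apply_nil, one_mul, ih]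
    show _ + ((ul (a, ε)).val : NCSeries σ ℤ) [a] * FL _ [] = _
    rw [FL_apply_nil, mul_one, ul_apply_single]
    cases ε <;> simp <;> ring
    
lemma monL_cons_run (a : σ) : ∀ (L₂ : List (σ × Bool)) (ε : Bool),
    monL ((a, ε) :: L₂) = a :: monL (dropR a ((a, ε) :: L₂)) := by
  intro L₂
  induction L₂ with
  | nil =>
    intro ε
    show dd [a] = a :: monL (dropR a ((a, ε) :: []))
    rw [dropR, if_pos rfl]
    rfl
  | cons ℓ₂ L₃ ih =>
    obtain ⟨c, δ⟩ := ℓ₂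
    intro ε
    by_cases hca : c = a
    · subst hca
      have h1 : monL ((c, ε) :: (c, δ) :: L₃) = monL ((c, δ) :: L₃) := by
        show dd (c :: c :: _) = dd (c :: _)
        rw [dd, if_pos rfl]
      have h2 : dropR c ((c, ε) :: (c, δ) :: L₃) = dropR c ((c, δ) :: L₃) := by
        rw [dropR, if_pos rfl]
      rw [h1, h2, ih δ]
    · have h1 : monL ((a, ε) :: (c, δ) :: L₃) = a :: monL ((c, δ) :: L₃) := by
        show dd (a :: c :: _) = a :: dd (c :: _)
        rw [dd, if_neg (Ne.symm hca)]
      have h2 : dropR a ((a, ε) :: (c, δ) :: L₃) = (c, δ) :: L₃ := by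
        rw [dropR, if_pos rfl, dropR, if_neg hca]
      rw [h1, h2]

lemma nonzero : ∀ (n : ℕ) (L : List (σ × Bool)), L.length ≤ n → Red L →
    FL L (monL L) ≠ 0 := by
  intro n
  induction n with
  | zero =>
    intro L hL _
    have : L = [] := List.length_eq_zero_iff.mp (Nat.le_zero.mp hL)
    subst this
    show FL [] (monL []) ≠ 0
    rw [FL_nil]
    show (1 : NCSeries σ ℤ) [] ≠ 0
    rw [one_apply, if_pos rfl]
    exact one_ne_zero
  | succ n ih =>
    intro L hL hred
    cases L with
    | nil =>
      rw [FL_nil]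
      show (1 : NCSeries σ ℤ) [] ≠ 0
      rw [one_apply, if_pos rfl]
      exact one_ne_zero
    | cons ℓ L₂ =>
      obtain ⟨a, ε⟩ := ℓ
      rw [monL_cons_run a L₂ ε]
      have h1 := main a ((a, ε) :: L₂) 1
      rw [List.replicate_one, List.singleton_append] at h1
      rw [h1]
      have hdr : dropR a ((a, ε) :: L₂) = dropR a L₂ := by rw [dropR, if_pos rfl]
      apply mul_ne_zero
      · have hrp := runP_replicate a ((a, ε) :: L₂) ε hred rfl
        have hlen : (runP a ((a, ε) :: L₂)).length = (runP a L₂).length + 1 := by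
          rw [runP, if_pos rfl, List.length_cons]
        rw [hrp, FL_replicate, hlen]
        intro hcon
        cases ε <;> simp at hcon <;> omega
      · apply ih
        · rw [hdr]
          calc (dropR a L₂).length ≤ L₂.length := dropR_length a L₂
            _ ≤ n := by simpa using hL
        · exact red_dropR a _ hred

/-! ### Reduced words in the free group -/

lemma red_of_reduce : ∀ L : List (σ × Bool), FreeGroup.reduce L = L → Red L := by
  intro L
  induction L with
  | nil => intro _; exact List.isChain_nil
  | cons x L₂ ih =>
    intro h
    rw [FreeGroup.reduce.cons] at h
    cases hr : FreeGroup.reduce L₂ with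
    | nil =>
      rw [hr] at h
      have : L₂ = [] := by simpa using (congrArg List.tail h).symm
      subst this
      exact List.isChain_singleton _
    | cons y t =>
      rw [hr] at h
      replace h : (if x.1 = y.1 ∧ x.2 = !y.2 then t else x :: y :: t) = x :: L₂ := h
      by_cases hc : x.1 = y.1 ∧ x.2 = !y.2
      · exfalso
        rw [if_pos hc] at h
        have hle : (FreeGroup.reduce L₂).length ≤ L₂.length :=
          FreeGroup.Red.length_le (FreeGroup.reduce.red)
        rw [hr] at hle
        have := congrArg List.length h
        simp only [List.length_cons] at this hle
        omega
      · rw [if_neg hc] at h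
        have hL₂ : L₂ = y :: t := by
          have := congrArg List.tail h
          simpa using this.symm
        have hred₂ : Red L₂ := by
          apply ih
          rw [hr, hL₂]
        rw [hL₂]
        rw [hL₂] at hred₂
        apply List.isChain_cons.mpr
        refine ⟨?_, hred₂⟩
        intro z hz
        simp only [List.head?_cons, Option.mem_def, Option.some.injEq] at hz
        subst hz
        intro h1
        by_contra h2
        apply hc
        refine ⟨h1, ?_⟩
        cases hx : x.2 <;> cases hy : y.2 <;> simp_all

end MagnusInjAux

end MagnusInjAux

/-- The Magnus expansion `M : F_i → ℤ⟨⟨X₁,…,X_i⟩⟩ˣ`, the group homomorphism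
sending each generator `x j` to `1 + X j`, is injective. -/
theorem magnus_injective (i : ℕ) :
    Function.Injective (magnus ℤ (Fin i)) := by
  apply (injective_iff_map_eq_one _).mpr
  intro g hg
  by_contra hne
  have hW : g.toWord ≠ [] := fun h => hne (FreeGroup.toWord_eq_nil_iff.mp h)
  have hmag : magnus ℤ (Fin i) g = (g.toWord.map MagnusInjAux.ul).prod := by
    conv_lhs => rw [← FreeGroup.mk_toWord (x := g)]
    rw [show magnus ℤ (Fin i) = FreeGroup.lift (fun j => NCSeries.magnusUnit j) from rfl,
      FreeGroup.lift_mk]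
    rfl
  have hFL : MagnusInjAux.FL g.toWord = 1 := by
    rw [MagnusInjAux.FL, ← hmag, hg, Units.val_one]
  have hred : MagnusInjAux.Red g.toWord :=
    MagnusInjAux.red_of_reduce _ (FreeGroup.reduce_toWord g)
  have hnz := MagnusInjAux.nonzero g.toWord.length g.toWord le_rfl hred
  apply hnz
  rw [hFL, NCSeries.one_apply, if_neg]
  intro hmon
  apply hW
  have hh := MagnusInjAux.monL_head? g.toWord
  rw [hmon] at hh
  cases hW' : g.toWord with
  | nil => rfl
  | cons x t => rw [hW'] at hh; simp at hh
end

section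
/- For all n ≥ 1 and l ≥ 1: (1/n) Σ_{m|n} μ(n/m) Σ_{i=1}^{l-1} i^m = Σ_{j=1}^{l} (l choose j) · [(1/n) Σ_{m|n} μ(n/m) sur(m, j-1)], where sur(m,k) is the number of surjections from an m-element set onto a k-element set (with sur(m,0)=0 for m>0). -/
/-- `sur m k` is the number of surjections from an `m`-element set onto a
`k`-element set. Note `sur m 0 = 0` for `m > 0` automatically. -/
noncomputable def sur (m k : ℕ) : ℕ :=
  Nat.card {f : Fin m → Fin k // Function.Surjective f}

open Finset

lemma sur_eq_card_image_eq (m : ℕ) {β : Type*} [Fintype β] [DecidableEq β] (S : Finset β) :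
    Fintype.card {f : Fin m → β // Finset.image f univ = S} = sur m S.card := by
  classical
  have e1 : {f : Fin m → β // Finset.image f univ = S} ≃
      {g : Fin m → {x // x ∈ S} // Function.Surjective g} := by
    refine
      { toFun := fun f => ⟨fun x => ⟨f.1 x, by
          have h := mem_image_of_mem f.1 (mem_univ x)
          rwa [f.2] at h⟩, ?_⟩
        invFun := fun g => ⟨fun x => (g.1 x).1, ?_⟩
        left_inv := fun f => rfl
        right_inv := fun g => rfl }
    · rintro ⟨y, hy⟩
      have : y ∈ Finset.image f.1 univ := by rw [f.2]; exact hy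
      obtain ⟨x, -, hx⟩ := mem_image.mp this
      exact ⟨x, Subtype.ext hx⟩
    · ext y
      simp only [mem_image, mem_univ, true_and]
      constructor
      · rintro ⟨x, rfl⟩; exact (g.1 x).2
      · intro hy
        obtain ⟨x, hx⟩ := g.2 ⟨y, hy⟩
        exact ⟨x, by rw [hx]⟩
  have e : {x // x ∈ S} ≃ Fin S.card := S.equivFin
  have e2 : {g : Fin m → {x // x ∈ S} // Function.Surjective g} ≃
      {h : Fin m → Fin S.card // Function.Surjective h} :=
    Equiv.subtypeEquiv (Equiv.arrowCongr (Equiv.refl _) e)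
      (fun g => by
        constructor
        · intro hg; exact e.surjective.comp hg
        · intro hg y
          obtain ⟨x, hx⟩ := hg (e y)
          exact ⟨x, e.injective (by simpa using hx)⟩)
  rw [sur, Nat.card_eq_fintype_card]
  exact Fintype.card_congr (e1.trans e2)

lemma pow_eq_sum_choose_sur (i m : ℕ) :
    i ^ m = ∑ k ∈ range (i + 1), i.choose k * sur m k := by
  classical
  have h0 : i ^ m = Fintype.card (Fin m → Fin i) := by simp
  have h1 : Fintype.card (Fin m → Fin i) =
      ∑ S : Finset (Fin i), Fintype.card {f : Fin m → Fin i // Finset.image f univ = S} := by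
    rw [← Fintype.card_sigma]
    exact Fintype.card_congr (Equiv.sigmaFiberEquiv (fun f : Fin m → Fin i =>
      Finset.image f univ)).symm
  rw [h0, h1]
  simp_rw [sur_eq_card_image_eq]
  rw [← Finset.sum_fiberwise_of_maps_to (g := fun S : Finset (Fin i) => S.card)
      (t := range (i + 1)) (fun S _ => by
        simp only [mem_range, Nat.lt_succ_iff]
        simpa using S.card_le_univ)]
  refine Finset.sum_congr rfl fun k _ => ?_
  rw [Finset.sum_congr rfl (fun S hS => by
        rw [(Finset.mem_filter.mp hS).2]),
      Finset.sum_const, smul_eq_mul]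
  congr 1
  rw [← Finset.powerset_univ, ← Finset.powersetCard_eq_filter, Finset.card_powersetCard,
    Finset.card_univ, Fintype.card_fin]

lemma hockey (l k : ℕ) : ∑ i ∈ range l, i.choose k = l.choose (k + 1) := by
  induction l with
  | zero => simp
  | succ l ih =>
    rw [Finset.sum_range_succ, ih, Nat.choose_succ_succ, Nat.add_comm]

lemma sum_pow_eq (l m : ℕ) :
    ∑ i ∈ range l, i ^ m = ∑ k ∈ range l, l.choose (k + 1) * sur m k := by
  have h1 : ∀ i ∈ range l, i ^ m = ∑ k ∈ range l, i.choose k * sur m k := by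
    intro i hi
    rw [pow_eq_sum_choose_sur i m]
    refine Finset.sum_subset (Finset.range_subset_range.mpr ?_) ?_
    · simp only [mem_range] at hi; omega
    · intro k _ hk
      simp only [mem_range, Nat.lt_succ_iff, not_le] at hk
      rw [Nat.choose_eq_zero_of_lt hk, zero_mul]
  rw [Finset.sum_congr rfl h1, Finset.sum_comm]
  refine Finset.sum_congr rfl fun k _ => ?_
  rw [← Finset.sum_mul, hockey]

lemma key_nat (l m : ℕ) (hl : 1 ≤ l) (hm : 1 ≤ m) :
    ∑ i ∈ Icc 1 (l - 1), i ^ m = ∑ j ∈ Icc 1 l, l.choose j * sur m (j - 1) := by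
  have h1 : ∑ i ∈ Icc 1 (l - 1), i ^ m = ∑ i ∈ range l, i ^ m := by
    refine Finset.sum_subset (fun x hx => ?_) (fun x hx hx' => ?_)
    · simp only [mem_Icc] at hx; simp only [mem_range]; omega
    · simp only [mem_Icc, not_and, not_le] at hx'
      simp only [mem_range] at hx
      have hx0 : x = 0 := by omega
      subst hx0; exact zero_pow (by omega)
  rw [h1, sum_pow_eq, show Icc 1 l = Ico 1 (l + 1) from (Finset.Ico_add_one_right_eq_Icc ..).symm,
    Finset.sum_Ico_eq_sum_range]
  refine Finset.sum_congr (by congr 1) fun k _ => ?_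
  rw [Nat.add_comm 1 k]
  simp

/-- For all `n ≥ 1` and `l ≥ 1`:
`(1/n) Σ_{m∣n} μ(n/m) Σ_{i=1}^{l-1} i^m
  = Σ_{j=1}^{l} (l choose j) ⬝ (1/n) Σ_{m∣n} μ(n/m) sur(m, j-1)`. -/
theorem phi_eq_sum_choose_psi (n l : ℕ) (hn : 1 ≤ n) (hl : 1 ≤ l) :
    (1 / n : ℚ) * ∑ m ∈ n.divisors,
        ((ArithmeticFunction.moebius (n / m) : ℤ) : ℚ) *
          ∑ i ∈ Finset.Icc 1 (l - 1), (i : ℚ) ^ m =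
      ∑ j ∈ Finset.Icc 1 l, (l.choose j : ℚ) *
        ((1 / n : ℚ) * ∑ m ∈ n.divisors,
          ((ArithmeticFunction.moebius (n / m) : ℤ) : ℚ) * (sur m (j - 1) : ℚ)) := by

  have hkey : ∀ m ∈ n.divisors,
      (∑ i ∈ Finset.Icc 1 (l - 1), (i : ℚ) ^ m)
        = ∑ j ∈ Finset.Icc 1 l, (l.choose j : ℚ) * (sur m (j - 1) : ℚ) := by
    intro m hm
    have hm1 : 1 ≤ m := Nat.pos_of_mem_divisors hm
    have h := key_nat l m hl hm1
    calc ∑ i ∈ Finset.Icc 1 (l - 1), (i : ℚ) ^ m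
        = ((∑ i ∈ Icc 1 (l - 1), i ^ m : ℕ) : ℚ) := by push_cast; rfl
      _ = ((∑ j ∈ Icc 1 l, l.choose j * sur m (j - 1) : ℕ) : ℚ) := by rw [h]
      _ = _ := by push_cast; rfl
  calc (1 / n : ℚ) * ∑ m ∈ n.divisors,
        ((ArithmeticFunction.moebius (n / m) : ℤ) : ℚ) *
          ∑ i ∈ Finset.Icc 1 (l - 1), (i : ℚ) ^ m
      = ∑ m ∈ n.divisors, ∑ j ∈ Finset.Icc 1 l,
          (1 / n : ℚ) * (((ArithmeticFunction.moebius (n / m) : ℤ) : ℚ) *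
            ((l.choose j : ℚ) * (sur m (j - 1) : ℚ))) := by
        rw [Finset.mul_sum]
        refine Finset.sum_congr rfl fun m hm => ?_
        rw [hkey m hm, Finset.mul_sum, Finset.mul_sum]
    _ = ∑ j ∈ Finset.Icc 1 l, ∑ m ∈ n.divisors,
          (1 / n : ℚ) * (((ArithmeticFunction.moebius (n / m) : ℤ) : ℚ) *
            ((l.choose j : ℚ) * (sur m (j - 1) : ℚ))) := Finset.sum_comm
    _ = _ := by
        refine Finset.sum_congr rfl fun j _ => ?_
        rw [Finset.mul_sum, Finset.mul_sum]
        refine Finset.sum_congr rfl fun m _ => ?_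
        ring
end
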